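/- (Equation (7) / Lemma 2.7(b)) In the setting of Construction 2.6, for every β ∈ [0, β*] and every h = 1,...,n-1, one has V(Y_1(β),...,Y_h(β)) = β·v_h. In particular, for β ∈ (0, β*) the random variables X_1(β),...,X_n(β) are i.i.d. [0,1]-valued and satisfy P(X_1(β) ∈ {1, β·v_{n-1}, ..., β·v_1, 0}) = 1 with P(X_1(β) = 1) > 0 and P(X_1(β) = 0) > 0, with respect to the sampling cost c(β) > 0. -/

import Mathlib

open MeasureTheory ProbabilityTheory

/-- The σ-algebra generated by `Y 1, ..., Y i`. -/
def priorSigma {Ω : Type*} (Y : ℕ → Ω → ℝ) (i : ℕ) : MeasurableSpace Ω :=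
  ⨆ j ∈ Finset.Icc 1 i, MeasurableSpace.comap (Y j) Real.measurableSpace

/-- `τ` is a stopping rule for `Y 1, ..., Y n`: it takes values in `{1, ..., n}` and
each event `{τ = i}` depends only on `Y 1, ..., Y i`. -/
def IsStopRule {Ω : Type*} (Y : ℕ → Ω → ℝ) (n : ℕ) (τ : Ω → ℕ) : Prop :=
  (∀ ω, τ ω ∈ Finset.Icc 1 n) ∧
  ∀ i ∈ Finset.Icc 1 n, MeasurableSet[priorSigma Y i] {ω | τ ω = i}

/-- `V(Y_1,...,Y_n) = sup_τ E(Y_τ)`: the optimal expected return of the statistician. -/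
noncomputable def Vn {Ω : Type*} [MeasurableSpace Ω] (μ : Measure Ω)
    (Y : ℕ → Ω → ℝ) (n : ℕ) : ℝ :=
  sSup {r | ∃ τ, IsStopRule Y n τ ∧ r = ∫ ω, Y (τ ω) ω ∂μ}

/-- `M(Y_1,...,Y_n) = E(max_{1 ≤ i ≤ n} Y_i)`: the expected return of the prophet. -/
noncomputable def Mn {Ω : Type*} [MeasurableSpace Ω] (μ : Measure Ω)
    (Y : ℕ → Ω → ℝ) (n : ℕ) : ℝ :=
  ∫ ω, sSup ((fun i => Y i ω) '' Set.Icc 1 n) ∂μ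

set_option linter.unusedVariables false

set_option linter.unusedSectionVars false
set_option linter.unusedVariables false
set_option maxHeartbeats 1000000

section helpers
variable {Ω : Type*} [MeasurableSpace Ω] {μ : Measure Ω}

lemma integrable_of_bdd [IsProbabilityMeasure μ] {f : Ω → ℝ} (hf : Measurable f)
    {M : ℝ} (h : ∀ ω, |f ω| ≤ M) : Integrable f μ := by
  refine Integrable.mono' (integrable_const M) hf.aestronglyMeasurable ?_
  exact Filter.Eventually.of_forall (fun ω => by simpa using h ω)

lemma abs_ind_le (B : Set Ω) (f : Ω → ℝ) (ω : Ω) : |B.indicator f ω| ≤ |f ω| := by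
  by_cases h : ω ∈ B
  · simp [Set.indicator_of_mem h]
  · simp [Set.indicator_of_notMem h, abs_nonneg]

lemma abs_max_le' {a b c d : ℝ} (h1 : |a| ≤ c) (h2 : |b| ≤ d) : |max a b| ≤ max c d := by
  rcases max_cases a b with ⟨he, _⟩ | ⟨he, _⟩ <;> rw [he]
  · exact le_trans h1 (le_max_left _ _)
  · exact le_trans h2 (le_max_right _ _)

lemma comap_le_of_comp {Z W : Ω → ℝ} (g : ℝ → ℝ) (hg : Measurable g)
    (h : ∀ ω, Z ω = g (W ω)) :
    MeasurableSpace.comap Z Real.measurableSpace ≤ MeasurableSpace.comap W Real.measurableSpace := by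
  rintro s ⟨B, hB, rfl⟩
  refine ⟨g ⁻¹' B, hg hB, ?_⟩
  ext ω; simp [h ω]

lemma comap_eq_of_sub {Z Y : Ω → ℝ} (a : ℝ) (h : ∀ ω, Y ω = Z ω - a) :
    MeasurableSpace.comap Y Real.measurableSpace = MeasurableSpace.comap Z Real.measurableSpace := by
  refine le_antisymm (comap_le_of_comp (fun x => x - a) (measurable_id.sub_const a) h) ?_
  refine comap_le_of_comp (fun x => x + a) (measurable_id.add_const a) (fun ω => by rw [h ω]; ring)

lemma priorSigma_congr {Y Z : ℕ → Ω → ℝ}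
    (h : ∀ k, MeasurableSpace.comap (Y k) Real.measurableSpace
      = MeasurableSpace.comap (Z k) Real.measurableSpace) (i : ℕ) :
    priorSigma Y i = priorSigma Z i := by
  unfold priorSigma
  exact iSup_congr fun j => by rw [h j]

lemma priorSigma_mono {Y : ℕ → Ω → ℝ} {i i' : ℕ} (h : i ≤ i') :
    priorSigma Y i ≤ priorSigma Y i' := by
  refine iSup₂_le fun j hj => ?_
  refine le_iSup₂_of_le j ?_ le_rfl
  simp only [Finset.mem_Icc] at hj ⊢; omega

lemma priorSigma_le_ambient {Y : ℕ → Ω → ℝ} (hY : ∀ i, Measurable (Y i)) (i : ℕ) :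
    priorSigma Y i ≤ ‹MeasurableSpace Ω› :=
  iSup₂_le fun j _ => (hY j).comap_le

lemma comap_le_priorSigma {Y : ℕ → Ω → ℝ} {j i : ℕ} (h1 : 1 ≤ j) (h2 : j ≤ i) :
    MeasurableSpace.comap (Y j) Real.measurableSpace ≤ priorSigma Y i :=
  le_iSup₂_of_le j (by simp [Finset.mem_Icc]; omega) le_rfl

end helpers

section indep
variable {Ω : Type*} [MeasurableSpace Ω] {μ : Measure Ω}

/-- Key independence lemma: an event determined by `Z 1, ..., Z j` is independent of any
bounded function of `Z i`, `j < i ≤ n`. -/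
lemma indep_integral [IsProbabilityMeasure μ]
    (n : ℕ) (Z : ℕ → Ω → ℝ) (hZ : ∀ i, Measurable (Z i))
    (hindep : iIndepFun (fun i : Fin n => Z (i.1 + 1)) μ)
    (i j : ℕ) (hi1 : 1 ≤ i) (hin : i ≤ n) (hji : j < i)
    (B : Set Ω) (hB : MeasurableSet[priorSigma Z j] B)
    (φ : ℝ → ℝ) (hφ : Measurable φ) (M : ℝ) (hM : ∀ ω, |φ (Z i ω)| ≤ M) :
    ∫ ω, B.indicator (fun ω => φ (Z i ω)) ω ∂μ = (μ B).toReal * ∫ ω, φ (Z i ω) ∂μ := by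
  obtain ⟨k, rfl⟩ : ∃ k, i = k + 1 := ⟨i - 1, by omega⟩
  have hk : k < n := by omega
  classical
  have hST : Disjoint (Finset.univ.filter (fun s : Fin n => s.1 + 1 ≤ j))
      ({⟨k, hk⟩} : Finset (Fin n)) := by
    simp only [Finset.disjoint_left, Finset.mem_filter, Finset.mem_singleton]
    rintro a ⟨-, ha⟩ rfl
    simp only [Fin.val_mk] at ha
    omega
  have hIF := hindep.indepFun_finset _ _ hST (fun s => hZ _)
  have hmemT : (⟨k, hk⟩ : Fin n) ∈ ({⟨k, hk⟩} : Finset (Fin n)) := Finset.mem_singleton_self _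
  -- B is measurable w.r.t. the comap of the S-tuple
  have hBS : MeasurableSet[MeasurableSpace.comap
      (fun a (s : (Finset.univ.filter (fun s : Fin n => s.1 + 1 ≤ j))) => Z (s.1.1 + 1) a)
      MeasurableSpace.pi] B := by
    have hle : priorSigma Z j ≤ MeasurableSpace.comap
        (fun a (s : (Finset.univ.filter (fun s : Fin n => s.1 + 1 ≤ j))) => Z (s.1.1 + 1) a)
        MeasurableSpace.pi := by
      refine iSup₂_le fun m hm => ?_
      simp only [Finset.mem_Icc] at hm
      have hmn : m - 1 < n := by omega
      have hmem : (⟨m - 1, hmn⟩ : Fin n) ∈ Finset.univ.filter (fun s : Fin n => s.1 + 1 ≤ j) := by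
        simp only [Finset.mem_filter, Finset.mem_univ, true_and, Fin.val_mk]; omega
      rintro s ⟨A, hA, rfl⟩
      refine ⟨(fun v => v ⟨⟨m - 1, hmn⟩, hmem⟩) ⁻¹' A, (measurable_pi_apply _) hA, ?_⟩
      ext ω
      simp only [Set.mem_preimage]
      have hm1 : m - 1 + 1 = m := by omega
      rw [hm1]
    exact hle B hB
  obtain ⟨A, hA, hpre⟩ := hBS
  have hφm : Measurable (fun v : ((Finset.univ.filter (fun s : Fin n => s.1 + 1 ≤ j)) : Finset (Fin n)) → ℝ => A.indicator (fun _ => (1:ℝ)) v) :=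
    measurable_const.indicator hA
  have hψm : Measurable (fun v : (({⟨k, hk⟩} : Finset (Fin n)) : Finset (Fin n)) → ℝ => φ (v ⟨⟨k, hk⟩, hmemT⟩)) :=
    hφ.comp (measurable_pi_apply _)
  have hIF2 : IndepFun (fun ω => A.indicator (fun _ => (1:ℝ))
      ((fun a (s : (Finset.univ.filter (fun s : Fin n => s.1 + 1 ≤ j))) => Z (s.1.1 + 1) a) ω))
      (fun ω => φ (Z (k + 1) ω)) μ := hIF.comp hφm hψm
  have hBmeas : MeasurableSet B :=
    priorSigma_le_ambient hZ j B hB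
  have hindic : ∀ ω, (A.indicator (fun _ => (1:ℝ))
      ((fun a (s : (Finset.univ.filter (fun s : Fin n => s.1 + 1 ≤ j))) => Z (s.1.1 + 1) a) ω))
      = B.indicator (fun _ => (1:ℝ)) ω := by
    intro ω
    by_cases h : ω ∈ B
    · have h' : (fun s : ((Finset.univ.filter (fun s : Fin n => s.1 + 1 ≤ j)) : Finset (Fin n)) => Z (s.1.1 + 1) ω) ∈ A := by
        rw [← hpre] at h; exact h
      rw [Set.indicator_of_mem h, Set.indicator_of_mem h']
    · have h' : (fun s : ((Finset.univ.filter (fun s : Fin n => s.1 + 1 ≤ j)) : Finset (Fin n)) => Z (s.1.1 + 1) ω) ∉ A := by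
        rw [← hpre] at h; exact h
      rw [Set.indicator_of_notMem h, Set.indicator_of_notMem h']
  have hind : (fun ω => B.indicator (fun ω => φ (Z (k+1) ω)) ω)
      = fun ω => (A.indicator (fun _ => (1:ℝ))
        ((fun a (s : (Finset.univ.filter (fun s : Fin n => s.1 + 1 ≤ j))) => Z (s.1.1 + 1) a) ω))
        * φ (Z (k+1) ω) := by
    funext ω
    rw [hindic ω]
    by_cases h : ω ∈ B
    · simp [Set.indicator_of_mem h]
    · simp [Set.indicator_of_notMem h]
  rw [hind]
  have hint1 : Integrable (fun ω => A.indicator (fun _ => (1:ℝ))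
      ((fun a (s : (Finset.univ.filter (fun s : Fin n => s.1 + 1 ≤ j))) => Z (s.1.1 + 1) a) ω)) μ := by
    refine integrable_of_bdd (M := 1) ?_ ?_
    · exact (measurable_const.indicator hA).comp (by measurability)
    · intro ω
      rw [hindic ω]
      by_cases h : ω ∈ B
      · simp [Set.indicator_of_mem h]
      · simp [Set.indicator_of_notMem h]
  have hint2 : Integrable (fun ω => φ (Z (k+1) ω)) μ :=
    integrable_of_bdd (hφ.comp (hZ _)) hM
  have hmain := hIF2.integral_mul_eq_mul_integral hint1.aestronglyMeasurable hint2.aestronglyMeasurable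
  have hmul : ((fun ω => A.indicator (fun _ => (1:ℝ))
        ((fun a (s : (Finset.univ.filter (fun s : Fin n => s.1 + 1 ≤ j))) => Z (s.1.1 + 1) a) ω))
      * (fun ω => φ (Z (k+1) ω)))
      = fun ω => (A.indicator (fun _ => (1:ℝ))
        ((fun a (s : (Finset.univ.filter (fun s : Fin n => s.1 + 1 ≤ j))) => Z (s.1.1 + 1) a) ω))
        * φ (Z (k+1) ω) := rfl
  rw [hmul] at hmain
  rw [hmain]
  congr 1
  rw [show (fun ω => A.indicator (fun _ => (1:ℝ))
        ((fun a (s : (Finset.univ.filter (fun s : Fin n => s.1 + 1 ≤ j))) => Z (s.1.1 + 1) a) ω))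
      = B.indicator (fun _ => (1:ℝ)) from funext hindic, integral_indicator_const _ hBmeas]
  simp [measureReal_def]

end indep
section tstar
variable {Ω : Type*}

/-- The optimal threshold stopping rule: stop at the first time `i < h` with
`Z i ω ≥ w (h - i)`, or at time `h`. -/
noncomputable def tstar (Z : ℕ → Ω → ℝ) (w : ℕ → ℝ) (h : ℕ) (ω : Ω) : ℕ :=
  sInf {i | 1 ≤ i ∧ (i = h ∨ (i < h ∧ w (h - i) ≤ Z i ω))}

variable {Z : ℕ → Ω → ℝ} {w : ℕ → ℝ} {h : ℕ}

lemma tstar_mem_set (hh : 1 ≤ h) (ω : Ω) :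
    1 ≤ tstar Z w h ω ∧ (tstar Z w h ω = h ∨ (tstar Z w h ω < h ∧ w (h - tstar Z w h ω) ≤ Z (tstar Z w h ω) ω)) :=
  Nat.sInf_mem (⟨h, hh, Or.inl rfl⟩ : {i | 1 ≤ i ∧ (i = h ∨ (i < h ∧ w (h - i) ≤ Z i ω))}.Nonempty)

lemma tstar_bounds (hh : 1 ≤ h) (ω : Ω) : 1 ≤ tstar Z w h ω ∧ tstar Z w h ω ≤ h := by
  have h1 := tstar_mem_set (Z := Z) (w := w) hh ω
  have h2 : tstar Z w h ω ≤ h := Nat.sInf_le ⟨hh, Or.inl rfl⟩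
  exact ⟨h1.1, h2⟩

lemma tstar_ge_iff (hh : 1 ≤ h) {i : ℕ} (hi1 : 1 ≤ i) (hih : i ≤ h) (ω : Ω) :
    i ≤ tstar Z w h ω ↔ ∀ j, 1 ≤ j → j < i → Z j ω < w (h - j) := by
  constructor
  · intro hle j hj1 hji
    by_contra hcon
    push_neg at hcon
    have hjS : tstar Z w h ω ≤ j :=
      Nat.sInf_le ⟨hj1, Or.inr ⟨by omega, hcon⟩⟩
    omega
  · intro hall
    by_contra hcon
    push_neg at hcon
    have hmem := tstar_mem_set (Z := Z) (w := w) hh ω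
    rcases hmem.2 with he | ⟨hlt, hge⟩
    · omega
    · exact absurd hge (not_le.mpr (hall _ hmem.1 (by omega)))

lemma tstar_eq_iff (hh : 1 ≤ h) {i : ℕ} (hi1 : 1 ≤ i) (hih : i < h) (ω : Ω) :
    tstar Z w h ω = i ↔ (i ≤ tstar Z w h ω ∧ w (h - i) ≤ Z i ω) := by
  constructor
  · intro he
    refine ⟨le_of_eq he.symm, ?_⟩
    have hmem := tstar_mem_set (Z := Z) (w := w) hh ω
    rcases hmem.2 with h' | ⟨-, hge⟩
    · omega
    · rwa [he] at hge
  · rintro ⟨hge, hcond⟩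
    have : tstar Z w h ω ≤ i := Nat.sInf_le ⟨hi1, Or.inr ⟨hih, hcond⟩⟩
    omega

end tstar

section DP
variable {Ω : Type*} [MeasurableSpace Ω] {μ : Measure Ω}

/-- Finite-horizon optimal stopping for i.i.d. rewards minus linear sampling cost:
the value of the game equals the backward-induction value. -/
lemma DPmain [IsProbabilityMeasure μ]
    (n : ℕ) (Z : ℕ → Ω → ℝ) (hZ : ∀ i, Measurable (Z i))
    (hindep : iIndepFun (fun i : Fin n => Z (i.1 + 1)) μ)
    (hident : ∀ i ∈ Set.Icc 1 n, IdentDistrib (Z i) (Z 1) μ μ)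
    (M : ℝ) (hbd : ∀ i ∈ Set.Icc 1 n, ∀ ω, Z i ω ∈ Set.Icc 0 M)
    (c0 : ℝ) (Y : ℕ → Ω → ℝ) (hYdef : ∀ i ω, Y i ω = Z i ω - i * c0)
    (w : ℕ → ℝ) (hw0 : w 0 = 0)
    (hwrec : ∀ k, w (k+1) = (∫ ω, max (Z 1 ω) (w k) ∂μ) - c0)
    (h : ℕ) (hh1 : 1 ≤ h) (hhn : h ≤ n) :
    Vn μ Y h = w h := by
  have hYm : ∀ i, Measurable (Y i) := by
    intro i
    have : Y i = fun ω => Z i ω - i * c0 := funext (hYdef i)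
    rw [this]; exact (hZ i).sub_const _
  have hps : ∀ i, priorSigma Y i = priorSigma Z i :=
    priorSigma_congr (fun k => comap_eq_of_sub (k * c0) (hYdef k))
  have hNE : Nonempty Ω := by
    by_contra hc
    rw [not_nonempty_iff] at hc
    have h1 : (μ Set.univ) = 1 := measure_univ
    rw [Set.univ_eq_empty_iff.mpr hc] at h1
    simp at h1
  have hM0 : 0 ≤ M := by
    obtain ⟨ω⟩ := hNE
    exact le_trans (hbd 1 ⟨le_refl 1, le_trans hh1 hhn⟩ ω).1 (hbd 1 ⟨le_refl 1, le_trans hh1 hhn⟩ ω).2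
  have hZbd : ∀ i, 1 ≤ i → i ≤ n → ∀ ω, |Z i ω| ≤ M := by
    intro i h1 h2 ω
    have := hbd i ⟨h1, h2⟩ ω
    rw [abs_le]; exact ⟨by linarith [this.1], this.2⟩
  have hYbd : ∀ i, 1 ≤ i → i ≤ h → ∀ ω, |Y i ω| ≤ M + h * |c0| := by
    intro i hi1 hih ω
    rw [hYdef]
    have h1 := abs_le.mp (hZbd i hi1 (le_trans hih hhn) ω)
    have h2 : |(i:ℝ) * c0| ≤ h * |c0| := by
      rw [abs_mul, abs_of_nonneg (by positivity : (0:ℝ) ≤ (i:ℝ))]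
      have hc : (i:ℝ) ≤ h := Nat.cast_le.mpr hih
      nlinarith [abs_nonneg c0]
    have h3 := le_abs_self ((i:ℝ) * c0)
    have h4 := neg_abs_le ((i:ℝ) * c0)
    rw [abs_le]
    constructor <;> nlinarith
  have hIdInt : ∀ i, 1 ≤ i → i ≤ n → ∀ φ : ℝ → ℝ, Measurable φ →
      ∫ ω, φ (Z i ω) ∂μ = ∫ ω, φ (Z 1 ω) ∂μ := by
    intro i h1 h2 φ hφ
    exact ((hident i ⟨h1, h2⟩).comp hφ).integral_eq
  -- the integral of max(Z_i - i c0, w(h-i) - i c0)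
  have hφint : ∀ i, 1 ≤ i → i ≤ h →
      ∫ ω, max (Z i ω - i * c0) (w (h - i) - i * c0) ∂μ
        = w (h + 1 - i) - ((i:ℝ) - 1) * c0 := by
    intro i hi1 hih
    have e1 : (fun ω => max (Z i ω - i * c0) (w (h - i) - i * c0))
        = fun ω => max (Z i ω) (w (h - i)) - i * c0 := by
      funext ω; rw [max_sub_sub_right]
    rw [e1]
    have hint : Integrable (fun ω => max (Z i ω) (w (h - i))) μ := by
      refine integrable_of_bdd ((hZ i).max measurable_const) (M := max M |w (h-i)|) ?_
      intro ω
      exact abs_max_le' (hZbd i hi1 (le_trans hih hhn) ω) (le_refl _)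
    rw [integral_sub hint (integrable_const _), integral_const]
    simp only [measureReal_def, measure_univ, ENNReal.toReal_one, smul_eq_mul, one_mul]
    have e2 : ∫ ω, max (Z i ω) (w (h - i)) ∂μ = ∫ ω, max (Z 1 ω) (w (h - i)) ∂μ :=
      hIdInt i hi1 (le_trans hih hhn) (fun x => max x (w (h - i)))
        (measurable_id.max measurable_const)
    rw [e2]
    have e3 : h - i + 1 = h + 1 - i := by omega
    have e4 := hwrec (h - i)
    rw [e3] at e4
    rw [show (∫ ω, max (Z 1 ω) (w (h-i)) ∂μ) = w (h + 1 - i) + c0 by rw [e4]; ring]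
    ring
  -- the key step lemma
  have hstep : ∀ i, 1 ≤ i → i ≤ h → ∀ B : Set Ω, MeasurableSet[priorSigma Z (i-1)] B →
      ∫ ω, B.indicator (fun ω => max (Y i ω) (w (h - i) - i * c0)) ω ∂μ
        = (μ B).toReal * (w (h + 1 - i) - ((i:ℝ) - 1) * c0) := by
    intro i hi1 hih B hB
    have e1 : (fun ω => B.indicator (fun ω => max (Y i ω) (w (h - i) - i * c0)) ω)
        = fun ω => B.indicator (fun ω => (fun x => max (x - i * c0) (w (h - i) - i * c0)) (Z i ω)) ω := by
      funext ω
      congr 1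
      funext ω'
      rw [hYdef]
    rw [e1]
    rw [indep_integral n Z hZ hindep i (i-1) hi1 (le_trans hih hhn) (by omega) B hB
      (fun x => max (x - i * c0) (w (h - i) - i * c0))
      ((measurable_id.sub_const _).max measurable_const)
      (max (M + h * |c0|) |w (h - i) - i * c0|)
      (fun ω => abs_max_le' (by rw [← hYdef]; exact hYbd i hi1 hih ω) (le_refl _))]
    rw [hφint i hi1 hih]
  -- measurability of {i ≤ τ} for stopping rules
  have hBse : ∀ τ, IsStopRule Y h τ → ∀ i, 1 ≤ i → i ≤ h →
      MeasurableSet[priorSigma Z (i-1)] {ω | i ≤ τ ω} := by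
    intro τ hτ i hi1 hih
    have he : {ω | i ≤ τ ω} = (⋃ j ∈ Finset.Ico 1 i, {ω | τ ω = j})ᶜ := by
      ext ω
      have h1 := hτ.1 ω
      simp only [Finset.mem_Icc] at h1
      simp only [Set.mem_setOf_eq, Set.mem_compl_iff, Set.mem_iUnion, Finset.mem_Ico,
        not_exists, exists_prop]
      constructor
      · rintro hle j ⟨⟨hj1, hji⟩, heq⟩
        omega
      · intro hall
        by_contra hcon
        exact hall (τ ω) ⟨⟨by omega, by omega⟩, rfl⟩
    rw [he]
    refine MeasurableSet.compl ?_
    refine Finset.measurableSet_biUnion _ (fun j hj => ?_)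
    simp only [Finset.mem_Ico] at hj
    have h1 : MeasurableSet[priorSigma Y j] {ω | τ ω = j} :=
      hτ.2 j (by simp only [Finset.mem_Icc]; omega)
    rw [hps j] at h1
    exact priorSigma_mono (by omega) _ h1
  -- ambient measurability facts
  have hambY : ∀ τ, IsStopRule Y h τ → ∀ i, 1 ≤ i → i ≤ h → MeasurableSet {ω | τ ω = i} := by
    intro τ hτ i hi1 hih
    exact priorSigma_le_ambient hYm i _ (hτ.2 i (by simp only [Finset.mem_Icc]; omega))
  have hambB : ∀ τ, IsStopRule Y h τ → ∀ i, 1 ≤ i → i ≤ h → MeasurableSet {ω | i ≤ τ ω} := by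
    intro τ hτ i hi1 hih
    exact priorSigma_le_ambient hZ (i-1) _ (hBse τ hτ i hi1 hih)
  -- integrability facts
  have hint1 : ∀ τ, IsStopRule Y h τ → ∀ i, 1 ≤ i → i ≤ h →
      Integrable (fun ω => Set.indicator {ω | τ ω = i} (Y i) ω) μ := by
    intro τ hτ i hi1 hih
    refine integrable_of_bdd ((hYm i).indicator (hambY τ hτ i hi1 hih)) (M := M + h * |c0|) ?_
    intro ω
    exact le_trans (abs_ind_le _ _ ω) (hYbd i hi1 hih ω)
  -- upper bound: every stopping rule has value at most the backward value
  have key_le : ∀ τ, IsStopRule Y h τ → ∀ d i, 1 ≤ i → i + d = h →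
      (∑ i' ∈ Finset.Ico i (h+1), ∫ ω, Set.indicator {ω | τ ω = i'} (Y i') ω ∂μ)
        ≤ (μ {ω | i ≤ τ ω}).toReal * (w (h + 1 - i) - ((i:ℝ) - 1) * c0) := by
    intro τ hτ d
    induction d with
    | zero =>
      intro i hi1 hsum
      have hih : i = h := by omega
      subst hih
      rw [Nat.Ico_succ_singleton, Finset.sum_singleton]
      have hset : {ω | τ ω = i} = {ω | i ≤ τ ω} := by
        ext ω
        have := hτ.1 ω
        simp only [Finset.mem_Icc] at this
        simp only [Set.mem_setOf_eq]
        omega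
      have hptw : (fun ω => Set.indicator {ω | τ ω = i} (Y i) ω)
          = fun ω => Set.indicator {ω | i ≤ τ ω}
            (fun ω => max (Y i ω) (w (i - i) - i * c0)) ω := by
        funext ω
        rw [← hset]
        congr 1
        funext ω'
        have hmax : w (i - i) - i * c0 ≤ Y i ω' := by
          rw [hYdef, Nat.sub_self, hw0]
          have := (hbd i ⟨hi1, hhn⟩ ω').1
          linarith
        rw [max_eq_left hmax]
      rw [hptw, hstep i hi1 le_rfl _ (hBse τ hτ i hi1 le_rfl)]
    | succ d ih =>
      intro i hi1 hsum
      have hih : i < h := by omega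
      have hIH := ih (i+1) (by omega) (by omega)
      have hidx : h + 1 - (i+1) = h - i := by omega
      rw [hidx] at hIH
      have hIH' : (∑ i' ∈ Finset.Ico (i+1) (h+1),
            ∫ ω, Set.indicator {ω | τ ω = i'} (Y i') ω ∂μ)
          ≤ (μ {ω | i+1 ≤ τ ω}).toReal * (w (h - i) - (i:ℝ) * c0) := by
        convert hIH using 3
        push_cast
        ring
      rw [Finset.sum_eq_sum_Ico_succ_bot (by omega : i < h + 1)]
      set K : ℝ := w (h - i) - (i:ℝ) * c0 with hK
      have hmsτ := hambY τ hτ i hi1 (le_of_lt hih)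
      have hmsB := hambB τ hτ (i+1) (by omega) (by omega)
      have hmsBi := hambB τ hτ i hi1 (le_of_lt hih)
      have hint2 : Integrable (fun ω => Set.indicator {ω | i+1 ≤ τ ω} (fun _ => K) ω) μ := by
        refine integrable_of_bdd (measurable_const.indicator hmsB) (M := |K|) ?_
        intro ω
        exact abs_ind_le _ _ ω
      have hintmax : Integrable (fun ω => Set.indicator {ω | i ≤ τ ω}
          (fun ω => max (Y i ω) K) ω) μ := by
        refine integrable_of_bdd (((hYm i).max measurable_const).indicator hmsBi)
          (M := max (M + h * |c0|) |K|) ?_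
        intro ω
        exact le_trans (abs_ind_le _ _ ω)
          (abs_max_le' (hYbd i hi1 (le_of_lt hih) ω) (le_refl _))
      have e5 : (μ {ω | i+1 ≤ τ ω}).toReal * K
          = ∫ ω, Set.indicator {ω | i+1 ≤ τ ω} (fun _ => K) ω ∂μ := by
        rw [integral_indicator_const _ hmsB, smul_eq_mul, measureReal_def]
      have e6 : (∫ ω, Set.indicator {ω | τ ω = i} (Y i) ω ∂μ)
            + ∫ ω, Set.indicator {ω | i+1 ≤ τ ω} (fun _ => K) ω ∂μ
          = ∫ ω, (Set.indicator {ω | τ ω = i} (Y i) ω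
            + Set.indicator {ω | i+1 ≤ τ ω} (fun _ => K) ω) ∂μ :=
        (integral_add (hint1 τ hτ i hi1 (le_of_lt hih)) hint2).symm
      have e7 : (∫ ω, (Set.indicator {ω | τ ω = i} (Y i) ω
            + Set.indicator {ω | i+1 ≤ τ ω} (fun _ => K) ω) ∂μ)
          ≤ ∫ ω, Set.indicator {ω | i ≤ τ ω} (fun ω => max (Y i ω) K) ω ∂μ := by
        refine integral_mono ((hint1 τ hτ i hi1 (le_of_lt hih)).add hint2) hintmax ?_
        intro ω
        by_cases h1 : τ ω = i
        · have h2 : ¬ (i+1 ≤ τ ω) := by omega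
          have h3 : i ≤ τ ω := by omega
          simp only [Set.indicator_of_mem (show ω ∈ {ω | τ ω = i} from h1),
            Set.indicator_of_notMem (show ω ∉ {ω | i+1 ≤ τ ω} from h2),
            Set.indicator_of_mem (show ω ∈ {ω | i ≤ τ ω} from h3), add_zero]
          exact le_max_left _ _
        · by_cases h2 : i+1 ≤ τ ω
          · have h3 : i ≤ τ ω := by omega
            simp only [Set.indicator_of_notMem (show ω ∉ {ω | τ ω = i} from h1),
              Set.indicator_of_mem (show ω ∈ {ω | i+1 ≤ τ ω} from h2),
              Set.indicator_of_mem (show ω ∈ {ω | i ≤ τ ω} from h3), zero_add]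
            exact le_max_right _ _
          · have h3 : ¬ (i ≤ τ ω) := by omega
            simp only [Set.indicator_of_notMem (show ω ∉ {ω | τ ω = i} from h1),
              Set.indicator_of_notMem (show ω ∉ {ω | i+1 ≤ τ ω} from h2),
              Set.indicator_of_notMem (show ω ∉ {ω | i ≤ τ ω} from h3), add_zero]
            exact le_refl 0
      have e8 := hstep i hi1 (le_of_lt hih) _ (hBse τ hτ i hi1 (le_of_lt hih))
      calc (∫ ω, Set.indicator {ω | τ ω = i} (Y i) ω ∂μ)
            + ∑ i' ∈ Finset.Ico (i+1) (h+1), ∫ ω, Set.indicator {ω | τ ω = i'} (Y i') ω ∂μ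
          ≤ (∫ ω, Set.indicator {ω | τ ω = i} (Y i) ω ∂μ)
            + (μ {ω | i+1 ≤ τ ω}).toReal * K := by linarith
        _ = ∫ ω, (Set.indicator {ω | τ ω = i} (Y i) ω
            + Set.indicator {ω | i+1 ≤ τ ω} (fun _ => K) ω) ∂μ := by rw [e5]; exact e6
        _ ≤ ∫ ω, Set.indicator {ω | i ≤ τ ω} (fun ω => max (Y i ω) K) ω ∂μ := e7
        _ = (μ {ω | i ≤ τ ω}).toReal * (w (h + 1 - i) - ((i:ℝ) - 1) * c0) := e8
  -- the optimal threshold rule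
  set τs : Ω → ℕ := tstar Z w h with hτs
  have hDset : ∀ i, 1 ≤ i → i ≤ h →
      {ω | i ≤ τs ω} = ⋂ j ∈ Finset.Ico 1 i, {ω | Z j ω < w (h - j)} := by
    intro i hi1 hih
    ext ω
    simp only [Set.mem_setOf_eq, Set.mem_iInter, Finset.mem_Ico, hτs]
    rw [tstar_ge_iff hh1 hi1 hih ω]
    constructor
    · intro hall j hj
      exact hall j hj.1 hj.2
    · intro hall j hj1 hj2
      exact hall j ⟨hj1, hj2⟩
  have hDmeas : ∀ i, 1 ≤ i → i ≤ h → MeasurableSet[priorSigma Z (i-1)] {ω | i ≤ τs ω} := by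
    intro i hi1 hih
    rw [hDset i hi1 hih]
    refine Finset.measurableSet_biInter _ (fun j hj => ?_)
    simp only [Finset.mem_Ico] at hj
    exact comap_le_priorSigma hj.1 (by omega) _ ⟨Set.Iio (w (h - j)), measurableSet_Iio, rfl⟩
  have hstop : IsStopRule Y h τs := by
    constructor
    · intro ω
      exact Finset.mem_Icc.mpr (tstar_bounds hh1 ω)
    · intro i hi
      simp only [Finset.mem_Icc] at hi
      rw [hps i]
      by_cases hih : i < h
      · have hseteq : {ω | τs ω = i} = {ω | i ≤ τs ω} ∩ {ω | w (h - i) ≤ Z i ω} := by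
          ext ω
          simp only [Set.mem_setOf_eq, Set.mem_inter_iff, hτs]
          exact tstar_eq_iff hh1 hi.1 hih ω
        rw [hseteq]
        refine MeasurableSet.inter ?_ ?_
        · exact priorSigma_mono (show i - 1 ≤ i by omega) _ (hDmeas i hi.1 (le_of_lt hih))
        · exact comap_le_priorSigma hi.1 le_rfl _ ⟨Set.Ici (w (h - i)), measurableSet_Ici, rfl⟩
      · have hieq : i = h := by omega
        subst hieq
        have hseteq : {ω | τs ω = i} = {ω | i ≤ τs ω} := by
          ext ω
          have := tstar_bounds (Z := Z) (w := w) hh1 ω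
          simp only [Set.mem_setOf_eq, hτs]
          omega
        rw [hseteq]
        exact priorSigma_mono (show i - 1 ≤ i by omega) _ (hDmeas i hi.1 le_rfl)
  -- the equality version for the threshold rule
  have key_eq : ∀ d i, 1 ≤ i → i + d = h →
      (∑ i' ∈ Finset.Ico i (h+1), ∫ ω, Set.indicator {ω | τs ω = i'} (Y i') ω ∂μ)
        = (μ {ω | i ≤ τs ω}).toReal * (w (h + 1 - i) - ((i:ℝ) - 1) * c0) := by
    intro d
    induction d with
    | zero =>
      intro i hi1 hsum
      have hih : i = h := by omega
      subst hih
      rw [Nat.Ico_succ_singleton, Finset.sum_singleton]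
      have hset : {ω | τs ω = i} = {ω | i ≤ τs ω} := by
        ext ω
        have := tstar_bounds (Z := Z) (w := w) hh1 ω
        simp only [Set.mem_setOf_eq, hτs]
        omega
      have hptw : (fun ω => Set.indicator {ω | τs ω = i} (Y i) ω)
          = fun ω => Set.indicator {ω | i ≤ τs ω}
            (fun ω => max (Y i ω) (w (i - i) - i * c0)) ω := by
        funext ω
        rw [← hset]
        congr 1
        funext ω'
        have hmax : w (i - i) - i * c0 ≤ Y i ω' := by
          rw [hYdef, Nat.sub_self, hw0]
          have := (hbd i ⟨hi1, hhn⟩ ω').1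
          linarith
        rw [max_eq_left hmax]
      rw [hptw, hstep i hi1 le_rfl _ (hBse τs hstop i hi1 le_rfl)]
    | succ d ih =>
      intro i hi1 hsum
      have hih : i < h := by omega
      have hIH := ih (i+1) (by omega) (by omega)
      have hidx : h + 1 - (i+1) = h - i := by omega
      rw [hidx] at hIH
      have hIH' : (∑ i' ∈ Finset.Ico (i+1) (h+1),
            ∫ ω, Set.indicator {ω | τs ω = i'} (Y i') ω ∂μ)
          = (μ {ω | i+1 ≤ τs ω}).toReal * (w (h - i) - (i:ℝ) * c0) := by
        rw [hIH]
        congr 1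
        push_cast
        ring
      rw [Finset.sum_eq_sum_Ico_succ_bot (by omega : i < h + 1), hIH']
      set K : ℝ := w (h - i) - (i:ℝ) * c0 with hK
      have hBi := hBse τs hstop i hi1 (le_of_lt hih)
      have hmsBi : MeasurableSet {ω | i ≤ τs ω} := priorSigma_le_ambient hZ (i-1) _ hBi
      have hBisucc := hBse τs hstop (i+1) (by omega) (by omega)
      have hmsBisucc : MeasurableSet {ω | i+1 ≤ τs ω} := priorSigma_le_ambient hZ i _ hBisucc
      -- φ₁ : stopped payoff, φ₂ : continuation indicator
      have hMc0 : (0:ℝ) ≤ M + h * |c0| := by positivity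
      have hA : ∫ ω, Set.indicator {ω | τs ω = i} (Y i) ω ∂μ
          = (μ {ω | i ≤ τs ω}).toReal
            * ∫ ω, (fun x => if w (h-i) ≤ x then x - i * c0 else 0) (Z i ω) ∂μ := by
        rw [← indep_integral n Z hZ hindep i (i-1) hi1 (le_trans (le_of_lt hih) hhn) (by omega)
          _ hBi (fun x => if w (h-i) ≤ x then x - i * c0 else 0)
          (Measurable.ite (measurableSet_le measurable_const measurable_id)
            (measurable_id.sub_const _) measurable_const)
          (M + h * |c0|) ?_]
        · congr 1
          funext ω
          by_cases h1 : τs ω = i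
          · have h2 : i ≤ τs ω := le_of_eq h1.symm
            have h3 : w (h - i) ≤ Z i ω := ((tstar_eq_iff hh1 hi1 hih ω).mp h1).2
            rw [Set.indicator_of_mem (show ω ∈ {ω | τs ω = i} from h1),
              Set.indicator_of_mem (show ω ∈ {ω | i ≤ τs ω} from h2)]
            simp only [if_pos h3]
            rw [hYdef]
          · rw [Set.indicator_of_notMem (show ω ∉ {ω | τs ω = i} from h1)]
            by_cases h2 : i ≤ τs ω
            · have h3 : ¬ (w (h - i) ≤ Z i ω) := by
                intro hcon
                exact h1 ((tstar_eq_iff hh1 hi1 hih ω).mpr ⟨h2, hcon⟩)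
              rw [Set.indicator_of_mem (show ω ∈ {ω | i ≤ τs ω} from h2)]
              simp only [if_neg h3]
            · rw [Set.indicator_of_notMem (show ω ∉ {ω | i ≤ τs ω} from h2)]
        · intro ω
          by_cases h3 : w (h - i) ≤ Z i ω
          · simp only [if_pos h3]
            rw [← hYdef]
            exact hYbd i hi1 (le_of_lt hih) ω
          · simp only [if_neg h3, abs_zero]
            exact hMc0
      have hBsucc_eq : {ω | i+1 ≤ τs ω} = {ω | i ≤ τs ω} ∩ {ω | Z i ω < w (h - i)} := by
        ext ω
        simp only [Set.mem_setOf_eq, Set.mem_inter_iff, hτs]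
        rw [tstar_ge_iff hh1 (by omega) (by omega) ω, tstar_ge_iff hh1 hi1 (le_of_lt hih) ω]
        constructor
        · intro hall
          exact ⟨fun j hj1 hj2 => hall j hj1 (by omega), hall i hi1 (by omega)⟩
        · rintro ⟨hall, hcur⟩ j hj1 hj2
          rcases Nat.lt_or_ge j i with hji | hji
          · exact hall j hj1 hji
          · have : j = i := by omega
            subst this
            exact hcur
      have hmu : (μ {ω | i+1 ≤ τs ω}).toReal
          = (μ {ω | i ≤ τs ω}).toReal
            * ∫ ω, (fun x => if x < w (h-i) then (1:ℝ) else 0) (Z i ω) ∂μ := by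
        rw [← indep_integral n Z hZ hindep i (i-1) hi1 (le_trans (le_of_lt hih) hhn) (by omega)
          _ hBi (fun x => if x < w (h-i) then (1:ℝ) else 0)
          (Measurable.ite (measurableSet_lt measurable_id measurable_const)
            measurable_const measurable_const) 1 ?_]
        · rw [show (μ {ω | i+1 ≤ τs ω}).toReal
              = ∫ ω, Set.indicator {ω | i+1 ≤ τs ω} (fun _ => (1:ℝ)) ω ∂μ by
            rw [integral_indicator_const _ hmsBisucc]; simp [measureReal_def]]
          congr 1
          funext ω
          by_cases h1 : ω ∈ {ω | i+1 ≤ τs ω}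
          · have h2 : ω ∈ {ω | i ≤ τs ω} ∩ {ω | Z i ω < w (h - i)} := by
              rw [← hBsucc_eq]; exact h1
            rw [Set.indicator_of_mem h1, Set.indicator_of_mem h2.1]
            have h5 : Z i ω < w (h - i) := h2.2
            rw [if_pos h5]
          · rw [Set.indicator_of_notMem h1]
            by_cases h2 : ω ∈ {ω | i ≤ τs ω}
            · have h3 : ¬ (Z i ω < w (h - i)) := by
                intro hcon
                exact h1 (by rw [hBsucc_eq]; exact ⟨h2, hcon⟩)
              rw [Set.indicator_of_mem h2]
              rw [if_neg h3]
            · rw [Set.indicator_of_notMem h2]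
        · intro ω
          by_cases h3 : Z i ω < w (h - i) <;> simp [h3]
      -- combine
      have hintφ1 : Integrable (fun ω => (fun x => if w (h-i) ≤ x then x - i * c0 else 0) (Z i ω)) μ := by
        refine integrable_of_bdd ((Measurable.ite (measurableSet_le measurable_const measurable_id)
          (measurable_id.sub_const _) measurable_const).comp (hZ i)) (M := M + h * |c0|) ?_
        intro ω
        by_cases h3 : w (h - i) ≤ Z i ω
        · simp only [Function.comp_apply, if_pos h3]
          rw [← hYdef]
          exact hYbd i hi1 (le_of_lt hih) ω
        · simp only [Function.comp_apply, if_neg h3, abs_zero]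
          exact hMc0
      have hintφ2 : Integrable (fun ω => (fun x => if x < w (h-i) then (1:ℝ) else 0) (Z i ω) * K) μ := by
        refine integrable_of_bdd (((Measurable.ite (measurableSet_lt measurable_id measurable_const)
          measurable_const measurable_const).comp (hZ i)).mul_const K) (M := |K|) ?_
        intro ω
        by_cases h3 : Z i ω < w (h - i) <;> simp [h3, abs_nonneg]
      have hcomb : (∫ ω, (fun x => if w (h-i) ≤ x then x - i * c0 else 0) (Z i ω) ∂μ)
            + (∫ ω, (fun x => if x < w (h-i) then (1:ℝ) else 0) (Z i ω) ∂μ) * K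
          = ∫ ω, max (Z i ω - i * c0) (w (h - i) - i * c0) ∂μ := by
        rw [← integral_mul_const, ← integral_add hintφ1 hintφ2]
        congr 1
        funext ω
        by_cases h3 : w (h - i) ≤ Z i ω
        · have h4 : ¬ (Z i ω < w (h - i)) := not_lt.mpr h3
          simp only [if_pos h3, if_neg h4, zero_mul, add_zero]
          rw [max_eq_left (by linarith)]
        · have h4 : Z i ω < w (h - i) := not_le.mp h3
          simp only [if_neg h3, if_pos h4, one_mul, zero_add]
          rw [max_eq_right (by linarith), hK]
      rw [hA, hmu]
      rw [show (μ {ω | i ≤ τs ω}).toReal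
            * (∫ ω, (fun x => if w (h-i) ≤ x then x - i * c0 else 0) (Z i ω) ∂μ)
          + (μ {ω | i ≤ τs ω}).toReal
            * (∫ ω, (fun x => if x < w (h-i) then (1:ℝ) else 0) (Z i ω) ∂μ) * K
          = (μ {ω | i ≤ τs ω}).toReal
            * ((∫ ω, (fun x => if w (h-i) ≤ x then x - i * c0 else 0) (Z i ω) ∂μ)
              + (∫ ω, (fun x => if x < w (h-i) then (1:ℝ) else 0) (Z i ω) ∂μ) * K) by ring]
      rw [hcomb, hφint i hi1 (le_of_lt hih)]
  -- representation of the value of a stopping rule as a finite sum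
  have hsum_repr : ∀ τ, IsStopRule Y h τ → ∫ ω, Y (τ ω) ω ∂μ
      = ∑ i ∈ Finset.Ico 1 (h+1), ∫ ω, Set.indicator {ω | τ ω = i} (Y i) ω ∂μ := by
    intro τ hτ
    rw [← integral_finset_sum]
    · congr 1
      funext ω
      have hmem : τ ω ∈ Finset.Ico 1 (h+1) := by
        have := Finset.mem_Icc.mp (hτ.1 ω)
        rw [Finset.mem_Ico]
        omega
      rw [Finset.sum_eq_single_of_mem (τ ω) hmem]
      · rw [Set.indicator_of_mem (show ω ∈ {ω' | τ ω' = τ ω} from rfl)]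
      · intro b _ hb
        exact Set.indicator_of_notMem (show ω ∉ {ω' | τ ω' = b} from fun hc => hb (hc.symm ▸ rfl)) _
    · intro i hi
      rw [Finset.mem_Ico] at hi
      exact hint1 τ hτ i (by omega) (by omega)
  -- conclusion
  have huniv : ∀ τ, IsStopRule Y h τ → {ω | 1 ≤ τ ω} = Set.univ := by
    intro τ hτ
    ext ω
    simpa using (Finset.mem_Icc.mp (hτ.1 ω)).1
  have hub : ∀ r ∈ {r | ∃ τ, IsStopRule Y h τ ∧ r = ∫ ω, Y (τ ω) ω ∂μ}, r ≤ w h := by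
    rintro r ⟨τ, hτ, rfl⟩
    rw [hsum_repr τ hτ]
    have hkey := key_le τ hτ (h-1) 1 le_rfl (by omega)
    rw [huniv τ hτ] at hkey
    calc (∑ i' ∈ Finset.Ico 1 (h+1), ∫ ω, Set.indicator {ω | τ ω = i'} (Y i') ω ∂μ)
        ≤ (μ Set.univ).toReal * (w (h + 1 - 1) - (((1:ℕ):ℝ) - 1) * c0) := hkey
      _ = w h := by
          simp only [measure_univ, ENNReal.toReal_one, Nat.add_sub_cancel, Nat.cast_one, one_mul]
          ring
  have hmem : w h ∈ {r | ∃ τ, IsStopRule Y h τ ∧ r = ∫ ω, Y (τ ω) ω ∂μ} := by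
    refine ⟨τs, hstop, ?_⟩
    rw [hsum_repr τs hstop]
    have hkey := key_eq (h-1) 1 le_rfl (by omega)
    rw [huniv τs hstop] at hkey
    rw [hkey]
    simp only [measure_univ, ENNReal.toReal_one, Nat.add_sub_cancel, Nat.cast_one, one_mul]
    ring
  simp only [Vn]
  exact le_antisymm (csSup_le ⟨w h, hmem⟩ hub) (le_csSup ⟨w h, hub⟩ hmem)

end DP

section VnBounds
variable {Ω : Type*} [MeasurableSpace Ω] {μ : Measure Ω}

noncomputable def wrec (μ : Measure Ω) (Z1 : Ω → ℝ) (c0 : ℝ) : ℕ → ℝ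
  | 0 => 0
  | k+1 => (∫ ω, max (Z1 ω) (wrec μ Z1 c0 k) ∂μ) - c0

lemma wrec_zero (Z1 : Ω → ℝ) (c0 : ℝ) : wrec μ Z1 c0 0 = 0 := rfl

lemma wrec_succ (Z1 : Ω → ℝ) (c0 : ℝ) (k : ℕ) :
    wrec μ Z1 c0 (k+1) = (∫ ω, max (Z1 ω) (wrec μ Z1 c0 k) ∂μ) - c0 := rfl

lemma isStopRule_const_one {Y : ℕ → Ω → ℝ} {k : ℕ} (hk : 1 ≤ k) :
    IsStopRule Y k (fun _ => 1) := by
  constructor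
  · intro ω; simp only [Finset.mem_Icc]; omega
  · intro i hi
    by_cases h1 : i = 1
    · subst h1
      have : {ω : Ω | (fun _ => 1) ω = 1} = Set.univ := by ext ω; simp
      rw [this]; exact @MeasurableSet.univ _ (priorSigma Y 1)
    · have : {ω : Ω | (fun _ => 1) ω = i} = ∅ := by ext ω; simp; omega
      rw [this]; exact @MeasurableSet.empty _ (priorSigma Y i)

lemma IsStopRule.mono_horizon {Y : ℕ → Ω → ℝ} {k k' : ℕ} {τ : Ω → ℕ}
    (hτ : IsStopRule Y k τ) (hkk : k ≤ k') : IsStopRule Y k' τ := by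
  constructor
  · intro ω
    have := Finset.mem_Icc.mp (hτ.1 ω)
    simp only [Finset.mem_Icc]; omega
  · intro i hi
    simp only [Finset.mem_Icc] at hi
    by_cases h1 : i ≤ k
    · exact hτ.2 i (by simp only [Finset.mem_Icc]; omega)
    · have : {ω | τ ω = i} = ∅ := by
        ext ω
        have := Finset.mem_Icc.mp (hτ.1 ω)
        simp only [Set.mem_setOf_eq, Set.mem_empty_iff_false, iff_false]
        omega
      rw [this]; exact @MeasurableSet.empty _ (priorSigma Y i)

lemma stop_value_le [IsProbabilityMeasure μ] {n k : ℕ} {X : ℕ → Ω → ℝ}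
    (hmeas : ∀ i, Measurable (X i))
    (hval : ∀ i ∈ Set.Icc 1 n, ∀ ω, X i ω ∈ Set.Icc (0:ℝ) 1) {c : ℝ} (hc : 0 ≤ c)
    {Y : ℕ → Ω → ℝ} (hY : ∀ i ω, Y i ω = X i ω - i * c) (hk1 : 1 ≤ k) (hkn : k ≤ n)
    {τ : Ω → ℕ} (hτ : IsStopRule Y k τ) : ∫ ω, Y (τ ω) ω ∂μ ≤ 1 - c := by
  have hYm : ∀ i, Measurable (Y i) := by
    intro i
    have : Y i = fun ω => X i ω - i * c := funext (hY i)
    rw [this]; exact (hmeas i).sub_const _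
  have hamb : ∀ i, 1 ≤ i → i ≤ k → MeasurableSet {ω | τ ω = i} := by
    intro i hi1 hik
    exact priorSigma_le_ambient hYm i _ (hτ.2 i (by simp only [Finset.mem_Icc]; omega))
  have hYbd : ∀ i, 1 ≤ i → i ≤ k → ∀ ω, |Y i ω| ≤ 1 + k * c := by
    intro i hi1 hik ω
    rw [hY]
    have h1 := hval i ⟨hi1, le_trans hik hkn⟩ ω
    have h2 : (i:ℝ) * c ≤ k * c := by
      have : (i:ℝ) ≤ k := Nat.cast_le.mpr hik
      nlinarith
    have h3 : (0:ℝ) ≤ i * c := by positivity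
    rw [abs_le]
    constructor <;> nlinarith [h1.1, h1.2]
  have hint1 : ∀ i, 1 ≤ i → i ≤ k →
      Integrable (fun ω => Set.indicator {ω | τ ω = i} (Y i) ω) μ := by
    intro i hi1 hik
    refine integrable_of_bdd ((hYm i).indicator (hamb i hi1 hik)) (M := 1 + k * c) ?_
    intro ω
    exact le_trans (abs_ind_le _ _ ω) (hYbd i hi1 hik ω)
  have hrepr : ∫ ω, Y (τ ω) ω ∂μ
      = ∑ i ∈ Finset.Ico 1 (k+1), ∫ ω, Set.indicator {ω | τ ω = i} (Y i) ω ∂μ := by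
    rw [← integral_finset_sum]
    · congr 1
      funext ω
      have hmem : τ ω ∈ Finset.Ico 1 (k+1) := by
        have := Finset.mem_Icc.mp (hτ.1 ω)
        rw [Finset.mem_Ico]; omega
      rw [Finset.sum_eq_single_of_mem (τ ω) hmem]
      · rw [Set.indicator_of_mem (show ω ∈ {ω' | τ ω' = τ ω} from rfl)]
      · intro b _ hb
        exact Set.indicator_of_notMem (show ω ∉ {ω' | τ ω' = b} from fun hc' => hb (hc'.symm ▸ rfl)) _
    · intro i hi
      rw [Finset.mem_Ico] at hi
      exact hint1 i (by omega) (by omega)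
  rw [hrepr]
  have hle : ∀ i ∈ Finset.Ico 1 (k+1),
      (∫ ω, Set.indicator {ω | τ ω = i} (Y i) ω ∂μ)
        ≤ ∫ ω, Set.indicator {ω | τ ω = i} (fun _ => 1 - c) ω ∂μ := by
    intro i hi
    rw [Finset.mem_Ico] at hi
    refine integral_mono (hint1 i (by omega) (by omega)) ?_ ?_
    · refine integrable_of_bdd (measurable_const.indicator (hamb i (by omega) (by omega)))
        (M := |1 - c|) (fun ω => abs_ind_le _ _ ω)
    · intro ω
      by_cases h1 : ω ∈ {ω | τ ω = i}
      · rw [Set.indicator_of_mem h1, Set.indicator_of_mem h1, hY]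
        have h2 := hval i ⟨by omega, by omega⟩ ω
        have h3 : (1:ℝ) * c ≤ i * c := by
          have : (1:ℝ) ≤ i := by exact_mod_cast (by omega : 1 ≤ i)
          nlinarith
        nlinarith [h2.2]
      · rw [Set.indicator_of_notMem h1, Set.indicator_of_notMem h1]
  refine le_trans (Finset.sum_le_sum hle) ?_
  have hsum : (∑ i ∈ Finset.Ico 1 (k+1), ∫ ω, Set.indicator {ω | τ ω = i} (fun _ => 1 - c) ω ∂μ)
      = ∫ ω, (∑ i ∈ Finset.Ico 1 (k+1), Set.indicator {ω | τ ω = i} (fun _ => 1 - c) ω) ∂μ := by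
    rw [integral_finset_sum]
    intro i hi
    rw [Finset.mem_Ico] at hi
    refine integrable_of_bdd (measurable_const.indicator (hamb i (by omega) (by omega)))
      (M := |1 - c|) (fun ω => abs_ind_le _ _ ω)
  rw [hsum]
  have hptw : (fun ω => ∑ i ∈ Finset.Ico 1 (k+1), Set.indicator {ω | τ ω = i} (fun _ => 1 - c) ω)
      = fun _ => (1:ℝ) - c := by
    funext ω
    have hmem : τ ω ∈ Finset.Ico 1 (k+1) := by
      have := Finset.mem_Icc.mp (hτ.1 ω)
      rw [Finset.mem_Ico]; omega
    rw [Finset.sum_eq_single_of_mem (τ ω) hmem]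
    · rw [Set.indicator_of_mem (show ω ∈ {ω' | τ ω' = τ ω} from rfl)]
    · intro b _ hb
      exact Set.indicator_of_notMem (show ω ∉ {ω' | τ ω' = b} from fun hc' => hb (hc'.symm ▸ rfl)) _
  rw [hptw, integral_const]
  simp [measure_univ]

lemma Vn_nonempty_val {Y : ℕ → Ω → ℝ} {k : ℕ} (hk : 1 ≤ k) :
    (∫ ω, Y 1 ω ∂μ) ∈ {r | ∃ τ, IsStopRule Y k τ ∧ r = ∫ ω, Y (τ ω) ω ∂μ} :=
  ⟨fun _ => 1, isStopRule_const_one hk, rfl⟩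

lemma Vn_le_of [IsProbabilityMeasure μ] {n k : ℕ} {X : ℕ → Ω → ℝ}
    (hmeas : ∀ i, Measurable (X i))
    (hval : ∀ i ∈ Set.Icc 1 n, ∀ ω, X i ω ∈ Set.Icc (0:ℝ) 1) {c : ℝ} (hc : 0 ≤ c)
    {Y : ℕ → Ω → ℝ} (hY : ∀ i ω, Y i ω = X i ω - i * c) (hk1 : 1 ≤ k) (hkn : k ≤ n) :
    Vn μ Y k ≤ 1 - c := by
  refine csSup_le ⟨_, Vn_nonempty_val hk1⟩ ?_
  rintro r ⟨τ, hτ, rfl⟩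
  exact stop_value_le hmeas hval hc hY hk1 hkn hτ

lemma Vn_mono_of [IsProbabilityMeasure μ] {n k k' : ℕ} {X : ℕ → Ω → ℝ}
    (hmeas : ∀ i, Measurable (X i))
    (hval : ∀ i ∈ Set.Icc 1 n, ∀ ω, X i ω ∈ Set.Icc (0:ℝ) 1) {c : ℝ} (hc : 0 ≤ c)
    {Y : ℕ → Ω → ℝ} (hY : ∀ i ω, Y i ω = X i ω - i * c)
    (hk1 : 1 ≤ k) (hkk : k ≤ k') (hkn : k' ≤ n) :
    Vn μ Y k ≤ Vn μ Y k' := by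
  refine csSup_le ⟨_, Vn_nonempty_val hk1⟩ ?_
  rintro r ⟨τ, hτ, rfl⟩
  refine le_csSup ⟨1 - c, ?_⟩ ⟨τ, hτ.mono_horizon hkk, rfl⟩
  rintro r ⟨τ', hτ', rfl⟩
  exact stop_value_le hmeas hval hc hY (le_trans hk1 hkk) hkn hτ'

end VnBounds

set_option linter.unusedVariables false

theorem stmt18
    {Ω : Type*} [MeasurableSpace Ω] (μ : Measure Ω) [IsProbabilityMeasure μ]
    (n : ℕ) (X : ℕ → Ω → ℝ)
    (hmeas : ∀ i, Measurable (X i))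
    (hindep : iIndepFun (fun i : Fin n => X (i.1 + 1)) μ)
    (hident : ∀ i ∈ Set.Icc 1 n, IdentDistrib (X i) (X 1) μ μ)
    (hval : ∀ i ∈ Set.Icc 1 n, ∀ ω, X i ω ∈ Set.Icc (0:ℝ) 1)
    (c : ℝ) (Y : ℕ → Ω → ℝ) (hY : ∀ i ω, Y i ω = X i ω - i * c)
    (hn : 2 ≤ n) (hc : 0 < c) (hEX : c < ∫ ω, X 1 ω ∂μ)
    (hsupp : μ {ω | X 1 ω ∈ insert (1:ℝ) (insert 0 ((fun i => Vn μ Y i) '' Set.Icc 1 (n-1)))} = 1)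
    (h1 : 0 < μ {ω | X 1 ω = 1}) (h0 : 0 < μ {ω | X 1 ω = 0})
    (p c' βstar : ℝ)
    (hp : p = (μ {ω | X 1 ω = 1}).toReal) (hc' : c' = c - p) (hβ : βstar = -p / c')
    (Xb : ℝ → ℕ → Ω → ℝ)
    (hXb : ∀ β h ω, Xb β h ω = if X h ω = 1 then 1 else β * X h ω)
    (Yb : ℝ → ℕ → Ω → ℝ)
    (hYb : ∀ β h ω, Yb β h ω = Xb β h ω - h * (β * c' + p))
    :
    (∀ β ∈ Set.Icc (0:ℝ) βstar, ∀ h ∈ Set.Icc 1 (n-1), Vn μ (Yb β) h = β * Vn μ Y h) ∧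
    (∀ β ∈ Set.Ioo (0:ℝ) βstar,
      (∀ i ∈ Set.Icc 1 n, μ {ω | Xb β i ω ∈ Set.Icc (0:ℝ) 1} = 1) ∧
      iIndepFun (fun i : Fin n => Xb β (i.1 + 1)) μ ∧
      (∀ i ∈ Set.Icc 1 n, IdentDistrib (Xb β i) (Xb β 1) μ μ) ∧
      μ {ω | Xb β 1 ω ∈
        insert (1:ℝ) (insert 0 ((fun i => β * Vn μ Y i) '' Set.Icc 1 (n-1)))} = 1 ∧
      0 < μ {ω | Xb β 1 ω = 1} ∧ 0 < μ {ω | Xb β 1 ω = 0} ∧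
      0 < β * c' + p) := by
  classical
  have hc0 : (0:ℝ) ≤ c := le_of_lt hc
  -- DP identity for the original process
  have hDP : ∀ k, 1 ≤ k → k ≤ n → Vn μ Y k = wrec μ (X 1) c k := by
    intro k hk1 hk2
    exact DPmain n X hmeas hindep hident 1 hval c Y hY (wrec μ (X 1) c)
      (wrec_zero _ _) (fun k => wrec_succ _ _ k) k hk1 hk2
  have hVle : ∀ k, 1 ≤ k → k ≤ n → Vn μ Y k ≤ 1 - c :=
    fun k hk1 hk2 => Vn_le_of hmeas hval hc0 hY hk1 hk2
  have hVmono : ∀ k k', 1 ≤ k → k ≤ k' → k' ≤ n → Vn μ Y k ≤ Vn μ Y k' :=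
    fun k k' hk1 hkk hkn => Vn_mono_of hmeas hval hc0 hY hk1 hkk hkn
  have hV1 : Vn μ Y 1 = (∫ ω, X 1 ω ∂μ) - c := by
    rw [hDP 1 le_rfl (by omega), wrec_succ, wrec_zero]
    have he : (fun ω => max (X 1 ω) (0:ℝ)) = fun ω => X 1 ω :=
      funext fun ω => max_eq_left (hval 1 ⟨le_rfl, by omega⟩ ω).1
    rw [he]
  have hv1pos : 0 < Vn μ Y 1 := by rw [hV1]; linarith
  have hn1 : 1 ≤ n - 1 := by omega
  have hn1n : n - 1 ≤ n := by omega
  have hvstar_pos : 0 < Vn μ Y (n-1) := lt_of_lt_of_le hv1pos (hVmono 1 (n-1) le_rfl hn1 hn1n)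
  have hvstar_le : Vn μ Y (n-1) ≤ 1 - c := hVle (n-1) hn1 hn1n
  have hwk_le : ∀ k, k ≤ n-1 → wrec μ (X 1) c k ≤ Vn μ Y (n-1) := by
    intro k hk
    rcases Nat.eq_zero_or_pos k with hk0 | hk1
    · subst hk0; rw [wrec_zero]; linarith
    · rw [← hDP k hk1 (by omega)]
      exact hVmono k (n-1) hk1 hk hn1n
  have hwk_nonneg : ∀ k, k ≤ n-1 → 0 ≤ wrec μ (X 1) c k := by
    intro k hk
    rcases Nat.eq_zero_or_pos k with hk0 | hk1
    · subst hk0; rw [wrec_zero]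
    · rw [← hDP k hk1 (by omega)]
      exact le_of_lt (lt_of_lt_of_le hv1pos (hVmono 1 k le_rfl hk1 (by omega)))
  have hwk_le1 : ∀ k, k ≤ n-1 → wrec μ (X 1) c k ≤ 1 := by
    intro k hk
    linarith [hwk_le k hk, hvstar_le]
  -- p facts
  have hp_pos : 0 < p := by
    rw [hp]
    exact ENNReal.toReal_pos h1.ne' (measure_ne_top μ _)
  have hp_le1 : p ≤ 1 := by
    rw [hp]
    calc (μ {ω | X 1 ω = 1}).toReal ≤ (1 : ENNReal).toReal :=
          ENNReal.toReal_mono ENNReal.one_ne_top prob_le_one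
      _ = 1 := ENNReal.toReal_one
  -- the support set
  set S : Set ℝ := insert (1:ℝ) (insert 0 ((fun i => Vn μ Y i) '' Set.Icc 1 (n-1))) with hSdef
  have hScount : S.Countable :=
    (((Set.to_countable (Set.Icc 1 (n-1))).image _).insert 0).insert 1
  have hSmeas : MeasurableSet S := hScount.measurableSet
  have hXS : ∀ i ∈ Set.Icc 1 n, μ {ω | X i ω ∈ S} = 1 := by
    intro i hi
    have he : μ (X i ⁻¹' S) = μ (X 1 ⁻¹' S) := (hident i hi).measure_mem_eq hSmeas
    exact he.trans hsupp
  have hm1set : MeasurableSet {ω | X 1 ω = 1} := (hmeas 1) (measurableSet_singleton 1)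
  -- key inequality : p * v* ≤ p - c
  have hkey : p * Vn μ Y (n-1) ≤ p - c := by
    obtain ⟨m, hm⟩ : ∃ m, n - 1 = m + 1 := ⟨n - 2, by omega⟩
    have hrec : Vn μ Y (n-1) = (∫ ω, max (X 1 ω) (wrec μ (X 1) c m) ∂μ) - c := by
      rw [hDP (n-1) hn1 hn1n, hm, wrec_succ]
    have hae : ∀ᵐ ω ∂μ, max (X 1 ω) (wrec μ (X 1) c m)
        ≤ Set.indicator {ω | X 1 ω = 1} (fun _ => 1 - Vn μ Y (n-1)) ω + Vn μ Y (n-1) := by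
      have hae0 : ∀ᵐ ω ∂μ, X 1 ω ∈ S := by
        rw [MeasureTheory.ae_iff]
        have : {ω | ¬ X 1 ω ∈ S} = {ω | X 1 ω ∈ S}ᶜ := rfl
        rw [this, measure_compl (show MeasurableSet {ω | X 1 ω ∈ S} from (hmeas 1) hSmeas)
          (measure_ne_top μ _), hsupp]
        simp
      refine hae0.mono (fun ω hω => ?_)
      have hwm : wrec μ (X 1) c m ≤ Vn μ Y (n-1) := hwk_le m (by omega)
      have hwm1 : wrec μ (X 1) c m ≤ 1 := hwk_le1 m (by omega)
      rcases hω with hx1 | hx0 | ⟨j, hj, hXv⟩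
      · rw [Set.indicator_of_mem (show ω ∈ {ω | X 1 ω = 1} from hx1), hx1]
        rw [max_eq_left hwm1]
        linarith
      · have hne : X 1 ω ≠ 1 := by rw [hx0]; norm_num
        rw [Set.indicator_of_notMem (show ω ∉ {ω | X 1 ω = 1} from hne), hx0, zero_add]
        rw [max_le_iff]
        exact ⟨le_of_lt hvstar_pos, hwm⟩
      · have hjle : Vn μ Y j ≤ Vn μ Y (n-1) := hVmono j (n-1) hj.1 hj.2 hn1n
        have hne : X 1 ω ≠ 1 := by
          rw [← hXv]
          simp only
          intro hcon
          have : Vn μ Y j ≤ 1 - c := hVle j hj.1 (le_trans hj.2 hn1n)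
          rw [hcon] at this
          linarith
        rw [Set.indicator_of_notMem (show ω ∉ {ω | X 1 ω = 1} from hne), zero_add,
          max_le_iff, ← hXv]
        exact ⟨hjle, hwm⟩
    have hintL : Integrable (fun ω => max (X 1 ω) (wrec μ (X 1) c m)) μ := by
      refine integrable_of_bdd ((hmeas 1).max measurable_const)
        (M := max 1 |wrec μ (X 1) c m|) ?_
      intro ω
      refine abs_max_le' ?_ le_rfl
      rw [abs_le]
      constructor
      · linarith [(hval 1 ⟨le_rfl, by omega⟩ ω).1]
      · exact (hval 1 ⟨le_rfl, by omega⟩ ω).2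
    have hintR : Integrable (fun ω =>
        Set.indicator {ω | X 1 ω = 1} (fun _ => 1 - Vn μ Y (n-1)) ω + Vn μ Y (n-1)) μ := by
      refine Integrable.add ?_ (integrable_const _)
      refine integrable_of_bdd (measurable_const.indicator hm1set)
        (M := |1 - Vn μ Y (n-1)|) (fun ω => abs_ind_le _ _ ω)
    have hIle := integral_mono_ae hintL hintR hae
    rw [integral_add (by
      refine integrable_of_bdd (measurable_const.indicator hm1set)
        (M := |1 - Vn μ Y (n-1)|) (fun ω => abs_ind_le _ _ ω)) (integrable_const _),
      integral_indicator_const _ hm1set, integral_const] at hIle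
    simp only [measureReal_def, measure_univ, ENNReal.toReal_one, smul_eq_mul, one_mul] at hIle
    rw [← hp] at hIle
    have h2 : (∫ ω, max (X 1 ω) (wrec μ (X 1) c m) ∂μ) - c
        ≤ p * (1 - Vn μ Y (n-1)) + Vn μ Y (n-1) - c := by linarith
    rw [← hrec] at h2
    nlinarith
  have hpc : c < p := by nlinarith [hvstar_pos, hp_pos]
  have hc'neg : c' < 0 := by rw [hc']; linarith
  have hc'ne : c' ≠ 0 := ne_of_lt hc'neg
  have hβs : βstar = p / (p - c) := by
    rw [hβ, hc', neg_div, ← div_neg, neg_sub]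
  have hβstar_pos : 0 < βstar := by
    rw [hβs]
    exact div_pos hp_pos (by linarith)
  have hβv_le1 : ∀ β, 0 ≤ β → β ≤ βstar → ∀ k, k ≤ n - 1 → β * wrec μ (X 1) c k ≤ 1 := by
    intro β hβ0 hββ k hk
    have h1' := hwk_le k hk
    have h2' := hwk_nonneg k hk
    calc β * wrec μ (X 1) c k ≤ βstar * Vn μ Y (n-1) := by
          refine mul_le_mul hββ (le_trans h1' le_rfl) h2' (le_of_lt hβstar_pos)
      _ ≤ 1 := by
          rw [hβs, div_mul_eq_mul_div, div_le_one (by linarith)]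
          linarith
    -- the transformed process
  have hXbeq : ∀ β i, Xb β i = (fun x => if x = (1:ℝ) then (1:ℝ) else β * x) ∘ X i := by
    intro β i
    funext ω
    rw [hXb]
    rfl
  have hF : ∀ β : ℝ, Measurable (fun x => if x = (1:ℝ) then (1:ℝ) else β * x) := by
    intro β
    exact Measurable.ite (measurableSet_eq) measurable_const (measurable_id.const_mul β)
  have hXbm : ∀ β i, Measurable (Xb β i) := by
    intro β i
    rw [hXbeq]
    exact (hF β).comp (hmeas i)
  have hindepB : ∀ β : ℝ, iIndepFun (fun i : Fin n => Xb β (i.1 + 1)) μ := by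
    intro β
    have hcomp := hindep.comp (fun _ => (fun x => if x = (1:ℝ) then (1:ℝ) else β * x))
      (fun _ => hF β)
    have he : (fun (i : Fin n) => (fun x => if x = (1:ℝ) then (1:ℝ) else β * x) ∘ X (i.1 + 1))
        = fun (i : Fin n) => Xb β (i.1 + 1) := funext fun i => (hXbeq β (i.1 + 1)).symm
    rw [he] at hcomp
    exact hcomp
  have hidentB : ∀ β : ℝ, ∀ i ∈ Set.Icc 1 n, IdentDistrib (Xb β i) (Xb β 1) μ μ := by
    intro β i hi
    rw [hXbeq β i, hXbeq β 1]
    exact (hident i hi).comp (hF β)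
  have hXbbd : ∀ β : ℝ, 0 ≤ β → ∀ i ∈ Set.Icc 1 n, ∀ ω, Xb β i ω ∈ Set.Icc 0 (max 1 β) := by
    intro β hβ0 i hi ω
    rw [hXb]
    by_cases hx1 : X i ω = 1
    · rw [if_pos hx1]
      exact ⟨zero_le_one, le_max_left _ _⟩
    · rw [if_neg hx1]
      refine ⟨mul_nonneg hβ0 (hval i hi ω).1, ?_⟩
      exact le_trans (mul_le_of_le_one_right hβ0 (hval i hi ω).2) (le_max_right _ _)
  have hDPB : ∀ β : ℝ, 0 ≤ β → ∀ k, 1 ≤ k → k ≤ n →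
      Vn μ (Yb β) k = wrec μ (Xb β 1) (β * c' + p) k := by
    intro β hβ0 k hk1 hk2
    exact DPmain n (Xb β) (hXbm β) (hindepB β) (hidentB β) (max 1 β) (hXbbd β hβ0)
      (β * c' + p) (Yb β) (hYb β) (wrec μ (Xb β 1) (β * c' + p))
      (wrec_zero _ _) (fun k => wrec_succ _ _ k) k hk1 hk2
  -- the scaling identity for the backward values
  have hscale : ∀ β : ℝ, 0 ≤ β → β ≤ βstar → ∀ k, k ≤ n - 1 →
      wrec μ (Xb β 1) (β * c' + p) k = β * wrec μ (X 1) c k := by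
    intro β hβ0 hββ k
    induction k with
    | zero =>
      intro _
      rw [wrec_zero, wrec_zero]
      ring
    | succ k ih =>
      intro hk
      have ihk := ih (by omega)
      rw [wrec_succ, wrec_succ, ihk]
      have hptw : (fun ω => max (Xb β 1 ω) (β * wrec μ (X 1) c k))
          = fun ω => β * max (X 1 ω) (wrec μ (X 1) c k)
            + Set.indicator {ω | X 1 ω = 1} (fun _ => 1 - β) ω := by
        funext ω
        by_cases hx1 : X 1 ω = 1
        · rw [hXb, if_pos hx1, hx1,
            Set.indicator_of_mem (show ω ∈ {ω | X 1 ω = 1} from hx1),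
            max_eq_left (hβv_le1 β hβ0 hββ k (by omega)),
            max_eq_left (hwk_le1 k (by omega))]
          ring
        · rw [hXb, if_neg hx1,
            Set.indicator_of_notMem (show ω ∉ {ω | X 1 ω = 1} from hx1),
            add_zero, mul_max_of_nonneg _ _ hβ0]
      rw [hptw]
      have hint1 : Integrable (fun ω => β * max (X 1 ω) (wrec μ (X 1) c k)) μ := by
        refine Integrable.const_mul ?_ β
        refine integrable_of_bdd ((hmeas 1).max measurable_const)
          (M := max 1 |wrec μ (X 1) c k|) ?_
        intro ω
        refine abs_max_le' ?_ le_rfl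
        rw [abs_le]
        exact ⟨by linarith [(hval 1 ⟨le_rfl, by omega⟩ ω).1],
          (hval 1 ⟨le_rfl, by omega⟩ ω).2⟩
      have hint2 : Integrable (fun ω =>
          Set.indicator {ω | X 1 ω = 1} (fun _ => (1:ℝ) - β) ω) μ :=
        integrable_of_bdd (measurable_const.indicator hm1set)
          (M := |1 - β|) (fun ω => abs_ind_le _ _ ω)
      rw [integral_add hint1 hint2, integral_const_mul, integral_indicator_const _ hm1set,
        smul_eq_mul, measureReal_def, ← hp, hc']
      ring
  constructor
  · -- part (a)
    rintro β ⟨hβ0, hββ⟩ h hh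
    rw [hDPB β hβ0 h hh.1 (le_trans hh.2 hn1n), hscale β hβ0 hββ h hh.2,
      hDP h hh.1 (le_trans hh.2 hn1n)]
  · -- part (b)
    rintro β ⟨hβ0, hββ⟩
    have hβ0' : (0:ℝ) ≤ β := le_of_lt hβ0
    have hββ' : β ≤ βstar := le_of_lt hββ
    refine ⟨?_, hindepB β, hidentB β, ?_, ?_, ?_, ?_⟩
    · -- values in [0,1] a.s.
      intro i hi
      have hsub : {ω | X i ω ∈ S} ⊆ {ω | Xb β i ω ∈ Set.Icc (0:ℝ) 1} := by
        intro ω hω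
        simp only [Set.mem_setOf_eq] at hω ⊢
        rw [hXb]
        by_cases hx1 : X i ω = 1
        · rw [if_pos hx1]
          exact ⟨zero_le_one, le_rfl⟩
        · rw [if_neg hx1]
          simp only [hSdef, Set.mem_insert_iff, Set.mem_image] at hω
          rcases hω with hh1' | hh0 | ⟨j, hj, hXv⟩
          · exact absurd hh1' hx1
          · rw [hh0, mul_zero]
            exact ⟨le_rfl, zero_le_one⟩
          · constructor
            · exact mul_nonneg hβ0' (hval i hi ω).1
            · rw [← hXv]
              have hj2 : Vn μ Y j = wrec μ (X 1) c j := hDP j hj.1 (le_trans hj.2 hn1n)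
              rw [hj2]
              exact hβv_le1 β hβ0' hββ' j hj.2
      exact le_antisymm prob_le_one
        (le_trans (le_of_eq (hXS i hi).symm) (measure_mono hsub))
    · -- support a.s.
      have hsub : {ω | X 1 ω ∈ S} ⊆ {ω | Xb β 1 ω ∈
          insert (1:ℝ) (insert 0 ((fun i => β * Vn μ Y i) '' Set.Icc 1 (n-1)))} := by
        intro ω hω
        simp only [Set.mem_setOf_eq] at hω ⊢
        by_cases hx1 : X 1 ω = 1
        · rw [hXb, if_pos hx1]
          exact Set.mem_insert _ _
        · rw [hXb, if_neg hx1]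
          simp only [hSdef, Set.mem_insert_iff, Set.mem_image] at hω
          rcases hω with hh1' | hh0 | ⟨j, hj, hXv⟩
          · exact absurd hh1' hx1
          · rw [hh0, mul_zero]
            exact Set.mem_insert_of_mem _ (Set.mem_insert _ _)
          · refine Set.mem_insert_of_mem _ (Set.mem_insert_of_mem _ ?_)
            refine ⟨j, hj, ?_⟩
            simp only
            rw [← hXv]
      exact le_antisymm prob_le_one
        (le_trans (le_of_eq (hXS 1 ⟨le_rfl, by omega⟩).symm) (measure_mono hsub))
    · -- positive mass at 1
      refine lt_of_lt_of_le h1 (measure_mono ?_)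
      intro ω hω
      simp only [Set.mem_setOf_eq] at hω ⊢
      rw [hXb, if_pos hω]
    · -- positive mass at 0
      refine lt_of_lt_of_le h0 (measure_mono ?_)
      intro ω hω
      simp only [Set.mem_setOf_eq] at hω ⊢
      rw [hXb, hω, if_neg (by norm_num : (0:ℝ) ≠ 1), mul_zero]
    · -- positive sampling cost
      have h2 : βstar * c' < β * c' := mul_lt_mul_of_neg_right hββ hc'neg
      have h3 : βstar * c' = -p := by
        rw [hβ]
        exact div_mul_cancel₀ (-p) hc'ne
      linarith
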